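/- Let N ≥ 1 and a be integers with 1 ≤ a ≤ N, and let n, l be nonnegative integers with l ≤ n. Then ∑_{k=l+1}^{n} 2(−1)^k / ((n−k)! · (2a/N)_{n+k+1}) = (−1)^{l+1}(n−l) / ((n + a/N) · (n−l)! · (2a/N)_{n+l+1}). -/

import Mathlib

open Finset

/-- The Pochhammer symbol (rising factorial) `(x)_n = x(x+1)⋯(x+n−1)`. -/
noncomputable def poch (x : ℝ) (n : ℕ) : ℝ := (ascPochhammer ℝ n).eval x

/-- Lemma 2.1, formula (2.2): for `1 ≤ a ≤ N` and `l ≤ n`,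
`∑_{k=l+1}^{n} 2(−1)^k / ((n−k)!·(2a/N)_{n+k+1})
  = (−1)^{l+1}(n−l) / ((n + a/N)·(n−l)!·(2a/N)_{n+l+1})`. -/
theorem sum_two_neg_one_pow_div_factorial_poch
    (N a : ℕ) (h1 : 1 ≤ a) (h2 : a ≤ N) (n l : ℕ) (hln : l ≤ n) :
    ∑ k ∈ Finset.Icc (l + 1) n,
        2 * (-1 : ℝ) ^ k /
          ((n - k).factorial * poch (2 * (a : ℝ) / N) (n + k + 1))
      = (-1 : ℝ) ^ (l + 1) * ((n : ℝ) - l) /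
          (((n : ℝ) + (a : ℝ) / N) * (n - l).factorial *
            poch (2 * (a : ℝ) / N) (n + l + 1)) := by
  have hNn : 1 ≤ N := le_trans h1 h2
  have hN : 0 < (N:ℝ) := by exact_mod_cast hNn
  have ha : 0 < (a:ℝ) := by exact_mod_cast h1
  set x : ℝ := 2 * a / N with hxdef
  have hc : 0 < (a:ℝ)/N := by positivity
  have hx : 0 < x := by rw [hxdef]; positivity
  have hx2 : x = 2 * ((a:ℝ)/N) := by rw [hxdef]; ring
  have hpoch : ∀ m, 0 < poch x m := fun m => ascPochhammer_pos m x hx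
  set g : ℕ → ℝ := fun i => (-1:ℝ)^(l+i) * ((n:ℝ) - (l+i)) /
      (((n:ℝ) + (a:ℝ)/N) * ((n - (l+i)).factorial : ℝ) * poch x (n + (l+i) + 1)) with hg
  have key : ∑ k ∈ Finset.Icc (l+1) n, 2*(-1:ℝ)^k / (((n-k).factorial : ℝ) * poch x (n+k+1))
      = g (n - l) - g 0 := by
    rw [← Finset.Ico_add_one_right_eq_Icc, Finset.sum_Ico_eq_sum_range]
    have hrange : n + 1 - (l+1) = n - l := by omega
    rw [hrange, ← Finset.sum_range_sub g (n - l)]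
    apply Finset.sum_congr rfl
    intro i hi
    rw [Finset.mem_range] at hi
    have hk : l + 1 + i ≤ n := by omega
    have e1 : l + (i + 1) = l + 1 + i := by omega
    simp only [hg, e1]
    set m : ℕ := n - (l + 1 + i) with hm
    have hm1 : n - (l + i) = m + 1 := by omega
    have hpsucc : poch x (n + (l + 1 + i) + 1)
        = poch x (n + (l + i) + 1) * (x + ((n:ℝ) + (l:ℝ) + (i:ℝ) + 1)) := by
      have h' : n + (l + 1 + i) + 1 = (n + (l + i) + 1) + 1 := by omega
      rw [h', poch, poch, ascPochhammer_succ_eval]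
      push_cast
      ring
    rw [hm1, hpsucc]
    have hfac1 : ((m+1).factorial : ℝ) = ((m:ℝ)+1) * (m.factorial : ℝ) := by
      rw [Nat.factorial_succ]; push_cast; ring
    rw [hfac1]
    set c : ℝ := (a:ℝ)/N with hcdef
    set P : ℝ := poch x (n + (l + i) + 1) with hP
    set F : ℝ := (m.factorial : ℝ) with hF
    have hcastn : (n:ℝ) = (m:ℝ) + (l:ℝ) + 1 + (i:ℝ) := by
      have h'' : n = m + (l + 1 + i) := by omega
      rw [h'']; push_cast; ring
    have hpow : (-1:ℝ)^(l + 1 + i) = -((-1:ℝ)^(l+i)) := by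
      have : l + 1 + i = (l + i) + 1 := by omega
      rw [this, pow_succ]; ring
    set s : ℝ := (-1:ℝ)^(l+i) with hs
    rw [hpow, hcastn, hx2]
    have hF0 : F ≠ 0 := by rw [hF]; exact_mod_cast m.factorial_pos.ne'
    have hP0 : P ≠ 0 := (hpoch _).ne'
    have hd1 : (m:ℝ) + l + 1 + i + c ≠ 0 := by positivity
    have hd2 : 2 * c + ((m:ℝ) + l + 1 + i + ((l:ℝ) + i) + 1) ≠ 0 := by positivity
    have hd3 : (m:ℝ) + 1 ≠ 0 := by positivity
    field_simp
    push_cast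
    ring
  rw [key]
  have hg0 : g (n - l) = 0 := by
    have hz : (n:ℝ) - ((l:ℝ) + ((n - l : ℕ):ℝ)) = 0 := by
      rw [Nat.cast_sub hln]; ring
    simp only [hg, hz, mul_zero, zero_div]
  rw [hg0]
  simp only [hg, Nat.add_zero, pow_succ]
  push_cast
  field_simp
  ring
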